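/- Brauer's theorem: Let A be an n×n complex matrix with eigenvalues λ₁,…,λₙ (with multiplicity) and let x₁ be an eigenvector of A for λ₁. Then for any vector c ∈ ℂⁿ, the matrix = A + x₁cᵀ has eigenvalues λ₁ + cᵀx₁, λ₂, …, λₙ. -/

import Mathlib

open Polynomial Matrix

set_option synthInstance.maxHeartbeats 1000000 in
set_option maxHeartbeats 1000000 in
/-- **Brauer's theorem.** If `A` has characteristic polynomial `∏ (z - λᵢ)` and
`x` is an eigenvector for `λ₀`, then `A + x cᵀ` has characteristic polynomial
`(z - (λ₀ + cᵀx)) ∏_{i ≠ 0} (z - λᵢ)`. -/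
theorem brauer (n : ℕ) (A : Matrix (Fin (n + 1)) (Fin (n + 1)) ℂ) (lam : Fin (n + 1) → ℂ)
    (hchar : A.charpoly = ∏ i, (X - C (lam i)))
    (x c : Fin (n + 1) → ℂ) (hx : x ≠ 0) (hev : A.mulVec x = lam 0 • x) :
    (A + Matrix.vecMulVec x c).charpoly
      = (X - C (lam 0 + c ⬝ᵥ x)) * ∏ i ∈ Finset.univ.erase 0, (X - C (lam i)) := by
  classical
  set q : Polynomial ℂ := ∏ i ∈ Finset.univ.erase 0, (X - C (lam i)) with hqdef
  have hp : A.charpoly = (X - C (lam 0)) * q := by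
    rw [hchar, ← Finset.mul_prod_erase _ _ (Finset.mem_univ 0)]
  set u : Fin (n + 1) → Polynomial ℂ := fun i => C (x i) with hu_def
  set v : Fin (n + 1) → Polynomial ℂ := fun i => C (c i) with hv_def
  set M : Matrix (Fin (n + 1)) (Fin (n + 1)) (Polynomial ℂ) := charmatrix A with hM_def
  have hvmv : (RingHom.mapMatrix (C : ℂ →+* Polynomial ℂ)) (vecMulVec x c) = vecMulVec u v := by
    apply Matrix.ext; intro i j
    simp [vecMulVec_apply, _root_.map_mul, hu_def, hv_def]
  have hN : charmatrix (A + vecMulVec x c) = M - vecMulVec u v := by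
    simp only [charmatrix, map_add, hvmv, hM_def]
    abel
  have hMu : M *ᵥ u = (X - C (lam 0)) • u := by
    funext i
    have h1 : (A.mulVec x) i = lam 0 * x i := by rw [hev]; simp
    have h2 : ∀ j, M i j = (if i = j then X else 0) - C (A i j) := by
      intro j; by_cases h : i = j <;> simp [hM_def, h]
    simp only [Matrix.mulVec, dotProduct, h2, sub_mul, Finset.sum_sub_distrib, ite_mul, zero_mul,
      Finset.sum_ite_eq, Finset.mem_univ, if_true]
    have h3 : ∑ j, C (A i j) * u j = C (lam 0) * u i := by
      simp only [hu_def, ← C_mul, ← map_sum]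
      exact congrArg C (by simpa [Matrix.mulVec, dotProduct] using h1)
    rw [h3]
    simp only [Pi.smul_apply, smul_eq_mul]
    ring
  -- move to the field of rational functions
  set f : Polynomial ℂ →+* RatFunc ℂ := (algebraMap (Polynomial ℂ) (RatFunc ℂ)) with hf_def
  have hf : Function.Injective f := IsFractionRing.injective _ _
  set Mk : Matrix (Fin (n + 1)) (Fin (n + 1)) (RatFunc ℂ) := M.map f with hMk_def
  set uk : Fin (n + 1) → RatFunc ℂ := fun i => f (u i) with huk_def
  set vk : Fin (n + 1) → RatFunc ℂ := fun i => f (v i) with hvk_def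
  have hdet : Mk.det = f A.charpoly := (RingHom.map_det f M).symm
  have hpne : A.charpoly ≠ 0 := A.charpoly_monic.ne_zero
  have hMkdet : IsUnit Mk.det := by
    rw [hdet, isUnit_iff_ne_zero, ne_eq, map_eq_zero_iff f hf]
    exact hpne
  set a : RatFunc ℂ := f (X - C (lam 0)) with ha_def
  have ha : a ≠ 0 := by
    rw [ha_def, ne_eq, map_eq_zero_iff f hf]
    exact Polynomial.X_sub_C_ne_zero _
  have hMkuk : Mk *ᵥ uk = a • uk := by
    funext i
    rw [hMk_def, show (M.map ⇑f *ᵥ uk) i = f ((M *ᵥ u) i) from (RingHom.map_mulVec f M u i).symm,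
      hMu]
    simp only [Pi.smul_apply, smul_eq_mul, _root_.map_mul, ha_def, huk_def]
  have hinv : Mk⁻¹ *ᵥ uk = a⁻¹ • uk := by
    have h1 : Mk⁻¹ *ᵥ (Mk *ᵥ uk) = uk := by
      rw [mulVec_mulVec, nonsing_inv_mul _ hMkdet, one_mulVec]
    rw [hMkuk, Matrix.mulVec_smul Mk⁻¹ a uk] at h1
    calc Mk⁻¹ *ᵥ uk = a⁻¹ • (a • (Mk⁻¹ *ᵥ uk)) := by
          rw [smul_smul, inv_mul_cancel₀ ha, one_smul]
      _ = a⁻¹ • uk := by rw [h1]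
  have hvu : vk ⬝ᵥ uk = f (C (c ⬝ᵥ x)) := by
    simp only [dotProduct, huk_def, hvk_def, hu_def, hv_def, ← _root_.map_mul, ← map_sum, ← C_mul]
  have hNk : (charmatrix (A + vecMulVec x c)).map f
      = Mk + replicateCol Unit (-uk) * replicateRow Unit vk := by
    rw [hN]
    have h2 : (vecMulVec u v).map f = vecMulVec uk vk := by
      apply Matrix.ext; intro i j
      simp [vecMulVec_apply, _root_.map_mul, huk_def, hvk_def]
    have h3 : replicateCol Unit (-uk) = -(replicateCol Unit uk) := by
      apply Matrix.ext; intro i j; simp [replicateCol]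
    rw [Matrix.map_sub _ (map_sub f), h2, vecMulVec_eq Unit, hMk_def, sub_eq_add_neg, h3,
      Matrix.neg_mul]
  have key : ((charmatrix (A + vecMulVec x c)).map f).det
      = Mk.det * (1 + replicateRow Unit vk * Mk⁻¹ * replicateCol Unit (-uk)).det := by
    rw [hNk]
    exact det_add_replicateCol_mul_replicateRow hMkdet _ _
  have hsmall : (1 + replicateRow Unit vk * Mk⁻¹ * replicateCol Unit (-uk)).det
      = 1 - a⁻¹ * f (C (c ⬝ᵥ x)) := by
    rw [det_unique]
    have h4 : replicateRow Unit vk * Mk⁻¹ * replicateCol Unit (-uk)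
        = replicateRow Unit (vk ᵥ* Mk⁻¹) * replicateCol Unit (-uk) := by rw [replicateRow_vecMul]
    rw [Matrix.add_apply, one_apply_eq, h4, replicateRow_mul_replicateCol_apply]
    have h5 : (vk ᵥ* Mk⁻¹) ⬝ᵥ (-uk) = -(vk ⬝ᵥ (Mk⁻¹ *ᵥ uk)) := by
      rw [dotProduct_neg, dotProduct_mulVec]
    rw [h5, hinv, dotProduct_smul, hvu, smul_eq_mul, sub_eq_add_neg]
  have hfinal : f ((A + vecMulVec x c).charpoly)
      = f ((X - C (lam 0 + c ⬝ᵥ x)) * q) := by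
    rw [Matrix.charpoly, RingHom.map_det, RingHom.mapMatrix_apply, key, hsmall, hdet, hp]
    have hC : (X - C (lam 0 + c ⬝ᵥ x) : Polynomial ℂ) = (X - C (lam 0)) - C (c ⬝ᵥ x) := by
      rw [C_add]; ring
    rw [hC]
    simp only [_root_.map_mul, map_sub, ← ha_def]
    field_simp
  exact hf hfinal
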